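/- Let h : [0,∞) → ℝ be defined by h(x) = x^(−2) + x^(−3) for x ≥ 1 and h(x) = 7x − 5 for 0 ≤ x < 1, and define ℱ[h](x) := ∫_0^{π/2} h(x sin θ) dθ. Then lim_{x→∞} (x^3 / log x) · ℱ[h](x) = 1/2. -/

import Mathlib

open MeasureTheory Real Filter Set
open scoped Interval


lemma int_csc2 {a : ℝ} (ha : 0 < a) (hab : a ≤ π/2) :
    ∫ θ in a..(π/2), 1/(sin θ)^2 = cos a / sin a := by
  have hsub : uIcc a (π/2) = Icc a (π/2) := uIcc_of_le hab
  have hs : ∀ θ ∈ uIcc a (π/2), 0 < sin θ := by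
    intro θ hθ
    rw [hsub] at hθ
    exact sin_pos_of_pos_of_lt_pi (lt_of_lt_of_le ha hθ.1)
      (lt_of_le_of_lt hθ.2 (by linarith [pi_pos]))
  have hder : ∀ θ ∈ uIcc a (π/2), HasDerivAt (fun t => -(cos t / sin t)) (1/(sin θ)^2) θ := by
    intro θ hθ
    have h : HasDerivAt (fun t => -(cos t / sin t)) _ θ := ((Real.hasDerivAt_cos θ).div (Real.hasDerivAt_sin θ) (hs θ hθ).ne').neg
    convert h using 1
    have h1 := sin_sq_add_cos_sq θ
    rw [show (-sin θ * sin θ - cos θ * cos θ) = -(1:ℝ) by nlinarith [h1], neg_div, neg_neg,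
      one_div]
  have hint : IntervalIntegrable (fun θ => 1/(sin θ)^2) volume a (π/2) := by
    apply ContinuousOn.intervalIntegrable
    exact continuousOn_const.div ((continuous_sin.continuousOn).pow 2)
      (fun θ hθ => pow_ne_zero _ (hs θ hθ).ne')
  rw [intervalIntegral.integral_eq_sub_of_hasDerivAt hder hint]
  simp [Real.cos_pi_div_two, Real.sin_pi_div_two]

lemma int_csc3 {a : ℝ} (ha : 0 < a) (hab : a ≤ π/2) :
    ∫ θ in a..(π/2), 1/(sin θ)^3
      = (cos a/(sin a)^2 - Real.log (sin a/(1+cos a)))/2 := by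
  have hsub : uIcc a (π/2) = Icc a (π/2) := uIcc_of_le hab
  have hs : ∀ θ ∈ uIcc a (π/2), 0 < sin θ := by
    intro θ hθ
    rw [hsub] at hθ
    exact sin_pos_of_pos_of_lt_pi (lt_of_lt_of_le ha hθ.1)
      (lt_of_le_of_lt hθ.2 (by linarith [pi_pos]))
  have hc : ∀ θ ∈ uIcc a (π/2), 0 < 1 + cos θ := by
    intro θ hθ
    rw [hsub] at hθ
    have : 0 ≤ cos θ := Real.cos_nonneg_of_mem_Icc ⟨by linarith [hθ.1], hθ.2⟩
    linarith
  have hder : ∀ θ ∈ uIcc a (π/2),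
      HasDerivAt (fun t => (-(cos t/(sin t)^2) + Real.log (sin t/(1+cos t)))/2)
        (1/(sin θ)^3) θ := by
    intro θ hθ
    have hsθ := hs θ hθ
    have hcθ := hc θ hθ
    have h1 : HasDerivAt (fun t => -(cos t/(sin t)^2))
        (-((-sin θ * (sin θ)^2 - cos θ * (2 * sin θ^1 * cos θ))/((sin θ)^2)^2)) θ :=
      ((Real.hasDerivAt_cos θ).div ((Real.hasDerivAt_sin θ).pow 2)
        (pow_ne_zero _ hsθ.ne')).neg
    have h2inner : HasDerivAt (fun t => sin t/(1+cos t))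
        ((cos θ * (1+cos θ) - sin θ * (0 + -sin θ))/(1+cos θ)^2) θ :=
      (Real.hasDerivAt_sin θ).div ((hasDerivAt_const θ 1).add (Real.hasDerivAt_cos θ)) hcθ.ne'
    have h2 : HasDerivAt (fun t => Real.log (sin t/(1+cos t)))
        (((cos θ * (1+cos θ) - sin θ * (0 + -sin θ))/(1+cos θ)^2) / (sin θ/(1+cos θ))) θ :=
      h2inner.log (by positivity)
    have h : HasDerivAt (fun t => (-(cos t/(sin t)^2) + Real.log (sin t/(1+cos t)))/2) _ θ := (h1.add h2).div_const 2
    convert h using 1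
    have hpy := sin_sq_add_cos_sq θ
    field_simp
    linear_combination (-2 * cos θ - sin θ^2 - 2) * hpy
  have hint : IntervalIntegrable (fun θ => 1/(sin θ)^3) volume a (π/2) := by
    apply ContinuousOn.intervalIntegrable
    exact continuousOn_const.div ((continuous_sin.continuousOn).pow 3)
      (fun θ hθ => pow_ne_zero _ (hs θ hθ).ne')
  rw [intervalIntegral.integral_eq_sub_of_hasDerivAt hder hint]
  rw [Real.cos_pi_div_two, Real.sin_pi_div_two]
  norm_num
  ring

lemma int_lin (x b : ℝ) : ∫ θ in (0:ℝ)..b, (7*x*sin θ - 5) = 7*x*(1-cos b) - 5*b := by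
  rw [intervalIntegral.integral_sub (f := fun θ => 7*x*sin θ) ((continuous_const.mul Real.continuous_sin).intervalIntegrable _ _) intervalIntegrable_const]
  have : ∀ θ:ℝ, 7*x*sin θ = (7*x)*sin θ := fun θ => by ring
  rw [intervalIntegral.integral_const_mul, integral_sin, intervalIntegral.integral_const]
  simp
  ring

lemma key (x : ℝ) (hx : 2 ≤ x) :
    (∫ θ in (0:ℝ)..(π/2),
      (fun t : ℝ => if 1 ≤ t then t ^ (-2 : ℝ) + t ^ (-3 : ℝ) else 7 * t - 5) (x * sin θ))
    = 7*x*(1 - cos (arcsin (1/x))) - 5*arcsin (1/x)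
      + 3*cos (arcsin (1/x))/(2*x) + Real.log (x*(1+cos (arcsin (1/x))))/(2*x^3) := by
  have hx0 : (0:ℝ) < x := by linarith
  set a := arcsin (1/x) with ha_def
  have h1x0 : (0:ℝ) < 1/x := by positivity
  have h1x1 : (1:ℝ)/x < 1 := by rw [div_lt_one hx0]; linarith
  have ha0 : 0 < a := Real.arcsin_pos.2 h1x0
  have ha2 : a < π/2 := Real.arcsin_lt_pi_div_two.2 h1x1
  have hsina : sin a = 1/x := Real.sin_arcsin (by linarith) h1x1.le
  have hca : 0 < cos a := Real.cos_pos_of_mem_Ioo ⟨by linarith [pi_pos], ha2⟩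
  -- pointwise facts
  have hrpow : ∀ t:ℝ, 1 ≤ t → (if 1 ≤ t then t ^ (-2:ℝ) + t ^ (-3:ℝ) else 7*t-5)
      = 1/t^2 + 1/t^3 := by
    intro t ht
    have ht0 : (0:ℝ) < t := lt_of_lt_of_le one_pos ht
    rw [if_pos ht, show (-2:ℝ) = ((-2:ℤ):ℝ) by norm_num,
      show (-3:ℝ) = ((-3:ℤ):ℝ) by norm_num, Real.rpow_intCast, Real.rpow_intCast,
      zpow_neg, zpow_neg, one_div, one_div]
    norm_cast
  -- congruence on [a, π/2]
  have heq2 : EqOn (fun θ => (fun t : ℝ => if 1 ≤ t then t ^ (-2 : ℝ) + t ^ (-3 : ℝ)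
        else 7 * t - 5) (x * sin θ))
      (fun θ => (1/x^2)*(1/(sin θ)^2) + (1/x^3)*(1/(sin θ)^3)) (uIcc a (π/2)) := by
    intro θ hθ
    rw [uIcc_of_le ha2.le] at hθ
    have hθmem : θ ∈ Icc (-(π/2)) (π/2) := ⟨by linarith [hθ.1], hθ.2⟩
    have hamem : a ∈ Icc (-(π/2)) (π/2) := ⟨by linarith, ha2.le⟩
    have hsin : 1/x ≤ sin θ := by
      rw [← hsina]
      rcases eq_or_lt_of_le hθ.1 with h | h
      · rw [h]
      · exact (Real.strictMonoOn_sin hamem hθmem h).le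
    have hsinθ0 : 0 < sin θ := lt_of_lt_of_le h1x0 hsin
    have h1le : 1 ≤ x * sin θ := by
      rw [show (1:ℝ) = x * (1/x) by field_simp]
      exact mul_le_mul_of_nonneg_left hsin hx0.le
    simp only
    rw [hrpow _ h1le, mul_pow, mul_pow]
    ring
  -- ae congruence on [0, a]
  have hae : ∀ᵐ θ : ℝ, θ ≠ a := by
    rw [MeasureTheory.ae_iff]; simpa using Real.volume_singleton
  have heq1 : ∀ᵐ θ : ℝ, θ ∈ Ι (0:ℝ) a → (fun θ => (fun t : ℝ => if 1 ≤ t then t ^ (-2 : ℝ)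
        + t ^ (-3 : ℝ) else 7 * t - 5) (x * sin θ)) θ = 7*x*sin θ - 5 := by
    filter_upwards [hae] with θ hne hmem
    rw [uIoc_of_le ha0.le] at hmem
    have hθa : θ < a := lt_of_le_of_ne hmem.2 hne
    have hsin : sin θ < 1/x := by
      rw [← hsina]
      exact Real.strictMonoOn_sin ⟨by linarith [hmem.1, pi_pos], by linarith⟩
        ⟨by linarith, ha2.le⟩ hθa
    have : x * sin θ < 1 := by
      calc x * sin θ < x * (1/x) := by exact mul_lt_mul_of_pos_left hsin hx0
      _ = 1 := by field_simp
    simp only [if_neg (not_le.2 this)]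
    ring
  -- integrability of the two pieces
  have hi2 : IntervalIntegrable (fun θ => (fun t : ℝ => if 1 ≤ t then t ^ (-2 : ℝ)
      + t ^ (-3 : ℝ) else 7 * t - 5) (x * sin θ)) volume a (π/2) := by
    rw [intervalIntegrable_iff]
    have hcont : IntegrableOn (fun θ => (1/x^2)*(1/(sin θ)^2) + (1/x^3)*(1/(sin θ)^3))
        (Ι a (π/2)) volume := by
      rw [← intervalIntegrable_iff]
      apply ContinuousOn.intervalIntegrable
      have hs : ∀ θ ∈ uIcc a (π/2), sin θ ≠ 0 := by
        intro θ hθ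
        rw [uIcc_of_le ha2.le] at hθ
        exact (sin_pos_of_pos_of_lt_pi (lt_of_lt_of_le ha0 hθ.1)
          (lt_of_le_of_lt hθ.2 (by linarith [pi_pos]))).ne'
      apply ContinuousOn.add
      · exact continuousOn_const.mul (continuousOn_const.div
          ((continuous_sin.continuousOn).pow 2) (fun θ hθ => pow_ne_zero _ (hs θ hθ)))
      · exact continuousOn_const.mul (continuousOn_const.div
          ((continuous_sin.continuousOn).pow 3) (fun θ hθ => pow_ne_zero _ (hs θ hθ)))
    exact hcont.congr_fun (fun θ hθ => (heq2 (uIoc_subset_uIcc hθ)).symm) measurableSet_uIoc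
  have hi1 : IntervalIntegrable (fun θ => (fun t : ℝ => if 1 ≤ t then t ^ (-2 : ℝ)
      + t ^ (-3 : ℝ) else 7 * t - 5) (x * sin θ)) volume 0 a := by
    rw [intervalIntegrable_iff]
    have hcont : IntegrableOn (fun θ => 7*x*sin θ - 5) (Ι (0:ℝ) a) volume := by
      rw [← intervalIntegrable_iff]
      exact ((continuous_const.mul Real.continuous_sin).sub continuous_const).intervalIntegrable _ _
    apply hcont.congr_fun_ae
    rw [EventuallyEq, ae_restrict_iff' measurableSet_uIoc]
    filter_upwards [heq1] with θ h hmem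
    exact (h hmem).symm
  rw [← intervalIntegral.integral_add_adjacent_intervals hi1 hi2,
    intervalIntegral.integral_congr_ae heq1, intervalIntegral.integral_congr heq2, int_lin,
    intervalIntegral.integral_add, intervalIntegral.integral_const_mul,
    intervalIntegral.integral_const_mul, int_csc2 ha0 ha2.le, int_csc3 ha0 ha2.le, hsina]
  · have hlog : Real.log ((1/x)/(1+cos a)) = - Real.log (x*(1+cos a)) := by
      rw [show (1/x)/(1+cos a) = (x*(1+cos a))⁻¹ by field_simp, Real.log_inv]
    rw [hlog]
    have h1c : (0:ℝ) < 1 + cos a := by linarith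
    field_simp
    ring
  · apply ContinuousOn.intervalIntegrable
    apply continuousOn_const.mul (continuousOn_const.div ((continuous_sin.continuousOn).pow 2) ?_)
    intro θ hθ
    rw [uIcc_of_le ha2.le] at hθ
    exact pow_ne_zero _ (sin_pos_of_pos_of_lt_pi (lt_of_lt_of_le ha0 hθ.1)
      (lt_of_le_of_lt hθ.2 (by linarith [pi_pos]))).ne'
  · apply ContinuousOn.intervalIntegrable
    apply continuousOn_const.mul (continuousOn_const.div ((continuous_sin.continuousOn).pow 3) ?_)
    intro θ hθ
    rw [uIcc_of_le ha2.le] at hθ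
    exact pow_ne_zero _ (sin_pos_of_pos_of_lt_pi (lt_of_lt_of_le ha0 hθ.1)
      (lt_of_le_of_lt hθ.2 (by linarith [pi_pos]))).ne'

noncomputable def cc (x : ℝ) : ℝ := Real.sqrt (1 - (1/x)^2)
noncomputable def NN (x : ℝ) : ℝ := 7*x^4*(1 - cc x) + (3/2)*x^2*(cc x) - 5*x^3*arcsin (1/x)
noncomputable def UU (x : ℝ) : ℝ := (2 - (3/2)*(cc x))/(1 + cc x)^2
noncomputable def LL (x : ℝ) : ℝ := UU x - 5/((1 + cc x)*(cc x))

lemma cc_pos {x : ℝ} (hx : 2 ≤ x) : 0 < cc x := by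
  have h1 : (1/x)^2 < 1 := by
    rw [div_pow, one_pow, div_lt_one (by positivity)]
    nlinarith
  exact Real.sqrt_pos.2 (by linarith)

lemma cc_le_one {x : ℝ} (hx : 2 ≤ x) : cc x ≤ 1 :=
  Real.sqrt_le_one.2 (by nlinarith [sq_nonneg (1/x)])

lemma cc_sq {x : ℝ} (hx : 2 ≤ x) : x^2*(cc x)^2 = x^2 - 1 := by
  have h1 : (1/x)^2 < 1 := by
    rw [div_pow, one_pow, div_lt_one (by positivity)]
    nlinarith
  rw [cc, Real.sq_sqrt (by linarith)]
  field_simp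

lemma hc_lim : Tendsto cc atTop (nhds 1) := by
  have h1 : Tendsto (fun x : ℝ => 1/x) atTop (nhds 0) := by
    simpa [one_div] using tendsto_inv_atTop_zero (𝕜 := ℝ)
  have h2 : Tendsto (fun x : ℝ => 1 - (1/x)^2) atTop (nhds 1) := by
    have := (h1.pow 2).const_sub 1
    simpa using this
  have h3 := (Real.continuous_sqrt.continuousAt (x := 1)).tendsto.comp h2
  simp only [Function.comp_def] at h3
  unfold cc
  simpa [one_div] using h3

lemma hU_lim : Tendsto UU atTop (nhds (1/8)) := by
  have h : Tendsto UU atTop (nhds ((2 - (3/2)*1)/(1+1)^2)) := by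
    unfold UU
    exact (tendsto_const_nhds.sub (hc_lim.const_mul _)).div
      ((tendsto_const_nhds.add hc_lim).pow 2) (by norm_num)
  have : ((2:ℝ) - (3/2)*1)/(1+1)^2 = 1/8 := by norm_num
  rwa [this] at h

lemma hL_lim : Tendsto LL atTop (nhds (-19/8)) := by
  have h : Tendsto LL atTop (nhds (1/8 - 5/((1+1)*1))) := by
    unfold LL
    exact hU_lim.sub ((tendsto_const_nhds (x := (5:ℝ))).div
      ((tendsto_const_nhds.add hc_lim).mul hc_lim) (by norm_num))
  have : (1:ℝ)/8 - 5/((1+1)*1) = -19/8 := by norm_num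
  rwa [this] at h

lemma arcsin_bounds {x : ℝ} (hx : 2 ≤ x) :
    1/x < arcsin (1/x) ∧ arcsin (1/x) < (1/x)/(cc x) := by
  have hx0 : (0:ℝ) < x := by linarith
  have h1x0 : (0:ℝ) < 1/x := by positivity
  have h1x1 : (1:ℝ)/x < 1 := by rw [div_lt_one hx0]; linarith
  have ha0 : 0 < arcsin (1/x) := Real.arcsin_pos.2 h1x0
  have ha2 : arcsin (1/x) < π/2 := Real.arcsin_lt_pi_div_two.2 h1x1
  have hsina : sin (arcsin (1/x)) = 1/x := Real.sin_arcsin (by linarith) h1x1.le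
  constructor
  · have := Real.sin_lt ha0
    rw [hsina] at this
    exact this
  · have htan := Real.lt_tan ha0 ha2
    rw [Real.tan_eq_sin_div_cos, hsina, Real.cos_arcsin] at htan
    exact htan

lemma U_id {x : ℝ} (hx : 2 ≤ x) :
    7*x^4*(1 - cc x) + (3/2)*x^2*(cc x) - 5*x^2 = UU x := by
  have h1 := cc_pos hx
  have h2 := cc_sq hx
  have h1c : (0:ℝ) < 1 + cc x := by linarith
  rw [UU, eq_div_iff (by positivity)]
  linear_combination (-7*x^2 - 7*x^2*(cc x) - 2 + (3/2)*(cc x)) * h2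

lemma L_id {x : ℝ} (hx : 2 ≤ x) :
    7*x^4*(1 - cc x) + (3/2)*x^2*(cc x) - 5*x^2/(cc x) = LL x := by
  have h1 := cc_pos hx
  have h2 := cc_sq hx
  have h1c : (0:ℝ) < 1 + cc x := by linarith
  have h3 : 5*x^2/(cc x) = 5*x^2 + 5/((1+cc x)*(cc x)) := by
    field_simp
    linear_combination (-1) * h2
  rw [LL, ← U_id hx]
  linarith [h3]

lemma NU {x : ℝ} (hx : 2 ≤ x) : NN x ≤ UU x := by
  have hx0 : (0:ℝ) < x := by linarith
  have hb := (arcsin_bounds hx).1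
  have h5 : 5*x^2 ≤ 5*x^3*arcsin (1/x) := by
    have h : 5*x^3*(1/x) ≤ 5*x^3*arcsin (1/x) :=
      mul_le_mul_of_nonneg_left hb.le (by positivity)
    calc 5*x^2 = 5*x^3*(1/x) := by field_simp
    _ ≤ _ := h
  have := U_id hx
  rw [NN]
  linarith

lemma LN {x : ℝ} (hx : 2 ≤ x) : LL x ≤ NN x := by
  have hx0 : (0:ℝ) < x := by linarith
  have hc := cc_pos hx
  have hb := (arcsin_bounds hx).2
  have h5 : 5*x^3*arcsin (1/x) ≤ 5*x^2/(cc x) := by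
    have h : 5*x^3*arcsin (1/x) ≤ 5*x^3*((1/x)/(cc x)) :=
      mul_le_mul_of_nonneg_left hb.le (by positivity)
    calc 5*x^3*arcsin (1/x) ≤ 5*x^3*((1/x)/(cc x)) := h
    _ = 5*x^2/(cc x) := by field_simp
  have := L_id hx
  rw [NN]
  linarith

theorem stmt_4 :
    Tendsto (fun x : ℝ => (x ^ 3 / Real.log x) *
        ∫ θ in (0:ℝ)..(Real.pi/2),
          (fun t : ℝ => if 1 ≤ t then t ^ (-2 : ℝ) + t ^ (-3 : ℝ) else 7 * t - 5)
            (x * Real.sin θ))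
      atTop (nhds (1/2)) := by
  have heq : ∀ᶠ x in atTop, (x ^ 3 / Real.log x) *
      (∫ θ in (0:ℝ)..(Real.pi/2),
        (fun t : ℝ => if 1 ≤ t then t ^ (-2 : ℝ) + t ^ (-3 : ℝ) else 7 * t - 5)
          (x * Real.sin θ))
      = NN x / Real.log x + Real.log (x*(1+cc x))/(2*Real.log x) := by
    filter_upwards [eventually_ge_atTop 2] with x hx
    have hL : 0 < Real.log x := Real.log_pos (by linarith)
    have hx0 : (0:ℝ) < x := by linarith
    have hc := cc_pos hx
    have hccdef : Real.sqrt (1-(1/x)^2) = cc x := rfl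
    rw [key x hx, Real.cos_arcsin, hccdef, NN]
    field_simp
    ring
  have hinv : Tendsto (fun x:ℝ => (Real.log x)⁻¹) atTop (nhds 0) :=
    Real.tendsto_log_atTop.inv_tendsto_atTop
  have hU0 : Tendsto (fun x => UU x / Real.log x) atTop (nhds 0) := by
    have h := hU_lim.mul hinv
    rw [mul_zero] at h
    simpa [div_eq_mul_inv] using h
  have hL0 : Tendsto (fun x => LL x / Real.log x) atTop (nhds 0) := by
    have h := hL_lim.mul hinv
    rw [mul_zero] at h
    simpa [div_eq_mul_inv] using h
  have hNlim : Tendsto (fun x => NN x / Real.log x) atTop (nhds 0) := by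
    apply tendsto_of_tendsto_of_tendsto_of_le_of_le' hL0 hU0
    · filter_upwards [eventually_ge_atTop 2] with x hx
      exact (div_le_div_iff_of_pos_right (Real.log_pos (by linarith))).2 (LN hx)
    · filter_upwards [eventually_ge_atTop 2] with x hx
      exact (div_le_div_iff_of_pos_right (Real.log_pos (by linarith))).2 (NU hx)
  have hT2 : Tendsto (fun x => Real.log (x*(1+cc x))/(2*Real.log x)) atTop (nhds (1/2)) := by
    have h2a : Tendsto (fun x => Real.log (1+cc x)) atTop (nhds (Real.log 2)) := by
      have hadd : Tendsto (fun x => 1 + cc x) atTop (nhds 2) := by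
        have := tendsto_const_nhds (f := atTop (α := ℝ)) (x := (1:ℝ)) |>.add hc_lim
        norm_num at this
        exact this
      exact ((Real.continuousAt_log (by norm_num : (2:ℝ) ≠ 0)).tendsto).comp hadd
    have h2b : Tendsto (fun x:ℝ => (2*Real.log x)⁻¹) atTop (nhds 0) :=
      (Real.tendsto_log_atTop.const_mul_atTop two_pos).inv_tendsto_atTop
    have hmain : Tendsto (fun x => 1/2 + Real.log (1+cc x) * (2*Real.log x)⁻¹) atTop
        (nhds (1/2 + Real.log 2 * 0)) := tendsto_const_nhds.add (h2a.mul h2b)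
    rw [mul_zero, add_zero] at hmain
    apply hmain.congr'
    filter_upwards [eventually_ge_atTop 2] with x hx
    have hL : 0 < Real.log x := Real.log_pos (by linarith)
    have hx0 : (0:ℝ) < x := by linarith
    have hc := cc_pos hx
    rw [Real.log_mul hx0.ne' (by linarith : (1:ℝ) + cc x ≠ 0)]
    field_simp
  have hfin := hNlim.add hT2
  rw [zero_add] at hfin
  exact Tendsto.congr' (EventuallyEq.symm heq) hfin
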